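/- Let n ≥ 1, θ > 1/2 and δ₁ > 0. Then there exist C > 0 and t₀ > 0 such that for all t ≥ t₀: ∫_{|ξ| ≥ δ₁} (1+|ξ|^{2θ})^{−t} · sin²(t|ξ|)/|ξ|² dξ ≤ C t^{−1} (1+δ₁^{2θ})^{−t}. In particular this integral is o(t^{−n/(2θ)}) as t → ∞. -/

import Mathlib

open MeasureTheory Filter
open Set Metric


lemma aux_int (n : ℕ) (hn : 1 ≤ n) (δ p : ℝ) (hδ : 0 < δ) (hp : (n:ℝ) < p) :
    ∫ ξ in {ξ : EuclideanSpace ℝ (Fin n) | δ ≤ ‖ξ‖}, ‖ξ‖ ^ (-p)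
      = ((n : ℝ) * (volume (ball (0 : EuclideanSpace ℝ (Fin n)) 1)).toReal)
        * (δ ^ ((n:ℝ) - p) / (p - n)) := by
  set E := EuclideanSpace ℝ (Fin n)
  haveI : Nontrivial E := by
    have : Nonempty (Fin n) := ⟨⟨0, hn⟩⟩
    infer_instance
  have hdim : Module.finrank ℝ E = n := finrank_euclideanSpace_fin
  have hS : MeasurableSet {ξ : E | δ ≤ ‖ξ‖} :=
    measurableSet_le measurable_const measurable_norm
  have h1 : (∫ ξ in {ξ : E | δ ≤ ‖ξ‖}, ‖ξ‖ ^ (-p))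
      = ∫ ξ : E, (Ici δ).indicator (fun r => r ^ (-p)) ‖ξ‖ := by
    rw [← integral_indicator hS]
    refine integral_congr_ae (Filter.Eventually.of_forall fun ξ => ?_)
    by_cases h : δ ≤ ‖ξ‖ <;> simp [Set.indicator, h]
  rw [h1, integral_fun_norm_addHaar volume (fun r => (Ici δ).indicator (fun r => r ^ (-p)) r)]
  rw [hdim]
  have h2 : (∫ y in Ioi (0:ℝ), y ^ (n - 1) • (Ici δ).indicator (fun r => r ^ (-p)) y)
      = ∫ y in Ioi δ, y ^ ((n:ℝ) - 1 - p) := by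
    have : ∀ y : ℝ, y ^ (n - 1) • (Ici δ).indicator (fun r => r ^ (-p)) y
        = (Ici δ).indicator (fun r => r ^ (n - 1) * r ^ (-p)) y := by
      intro y
      by_cases h : y ∈ Ici δ <;> simp [Set.indicator, h]
    simp_rw [this]
    rw [setIntegral_indicator measurableSet_Ici]
    have hinter : Ioi (0:ℝ) ∩ Ici δ = Ici δ :=
      Set.inter_eq_right.mpr (fun y hy => lt_of_lt_of_le hδ hy)
    rw [show (Ioi (0:ℝ) ∩ Ici δ) = Ici δ from hinter, integral_Ici_eq_integral_Ioi]
    refine setIntegral_congr_fun measurableSet_Ioi (fun y hy => ?_)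
    have hy0 : 0 < y := lt_trans hδ hy
    rw [← Real.rpow_natCast y (n-1), ← Real.rpow_add hy0]
    congr 1
    rw [Nat.cast_sub hn]
    push_cast
    ring
  rw [h2, integral_Ioi_rpow_of_lt (by linarith) hδ]
  rw [nsmul_eq_mul, smul_eq_mul]
  have : (n:ℝ) - 1 - p + 1 = (n:ℝ) - p := by ring
  rw [this, neg_div, ← div_neg, neg_sub]
  rw [measureReal_def]; ring

lemma aux_integrable (n : ℕ) (δ p : ℝ) (hδ : 0 < δ) (hp : (n:ℝ) < p) :
    IntegrableOn (fun ξ : EuclideanSpace ℝ (Fin n) => ‖ξ‖ ^ (-p))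
      {ξ : EuclideanSpace ℝ (Fin n) | δ ≤ ‖ξ‖} := by
  set E := EuclideanSpace ℝ (Fin n)
  have hp0 : 0 < p := lt_of_le_of_lt (Nat.cast_nonneg n) hp
  have hS : MeasurableSet {ξ : E | δ ≤ ‖ξ‖} :=
    measurableSet_le measurable_const measurable_norm
  have hfinrank : (Module.finrank ℝ E : ℝ) < p := by
    rw [finrank_euclideanSpace_fin]; exact hp
  have hint : Integrable (fun ξ : E => (1+δ⁻¹)^p * (1+‖ξ‖)^(-p)) :=
    (integrable_one_add_norm hfinrank).const_mul _
  refine hint.integrableOn.mono' ?_ ?_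
  · exact (measurable_norm.pow_const (-p)).aestronglyMeasurable
  · filter_upwards [ae_restrict_mem hS] with ξ hξ
    have hr : (0:ℝ) < ‖ξ‖ := lt_of_lt_of_le hδ hξ
    rw [Real.norm_eq_abs, abs_of_nonneg (Real.rpow_nonneg (norm_nonneg _) _)]
    have hle : 1 + ‖ξ‖ ≤ (1+δ⁻¹) * ‖ξ‖ := by
      have : (1:ℝ) ≤ ‖ξ‖ / δ := (one_le_div hδ).mpr hξ
      have h2 : δ⁻¹ * ‖ξ‖ = ‖ξ‖ / δ := by ring
      nlinarith
    have h1 : ((1+δ⁻¹) * ‖ξ‖) ^ (-p) ≤ (1+‖ξ‖)^(-p) :=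
      Real.rpow_le_rpow_of_nonpos (by positivity) hle (by linarith)
    calc ‖ξ‖ ^ (-p) = (1+δ⁻¹)^p * ((1+δ⁻¹) * ‖ξ‖) ^ (-p) := by
          rw [Real.mul_rpow (by positivity) (norm_nonneg _), ← mul_assoc,
            ← Real.rpow_add (by positivity), add_neg_cancel, Real.rpow_zero, one_mul]
      _ ≤ (1+δ⁻¹)^p * (1+‖ξ‖)^(-p) := by
          exact mul_le_mul_of_nonneg_left h1 (by positivity)

lemma aux_key (θ δ₁ γ t r : ℝ) (hθ : 0 < θ) (hδ : 0 < δ₁)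
    (hγ : γ = 2*θ*(δ₁^(2*θ)/(1+δ₁^(2*θ)))) (hr : δ₁ ≤ r) (ht : 0 ≤ t) :
    (1 + r ^ (2*θ)) ^ (-t) ≤ (1 + δ₁ ^ (2*θ)) ^ (-t) * (δ₁ ^ (γ*t) * r ^ (-(γ*t))) := by
  have hr0 : 0 < r := lt_of_lt_of_le hδ hr
  set a := δ₁ ^ (2*θ) with ha_def
  have ha : 0 < a := Real.rpow_pos_of_pos hδ _
  set β := a / (1+a) with hβ_def
  have hβ0 : 0 ≤ β := by positivity
  have hβ1 : β ≤ 1 := by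
    rw [hβ_def, div_le_one (by linarith)]; linarith
  set x := (r/δ₁) ^ (2*θ) with hx_def
  have hx1 : (1:ℝ) ≤ x := Real.one_le_rpow ((one_le_div hδ).mpr hr) (by positivity)
  have hgeo : 1 ^ (1-β) * x ^ β ≤ (1-β) * 1 + β * x :=
    Real.geom_mean_le_arith_mean2_weighted (by linarith) hβ0 zero_le_one
      (by linarith) (by ring)
  have hax : a * x = r ^ (2*θ) := by
    rw [ha_def, hx_def, ← Real.mul_rpow hδ.le (by positivity)]
    congr 1
    field_simp
  have hbase : (1+a) * (r/δ₁) ^ γ ≤ 1 + r ^ (2*θ) := by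
    have hγβ : (r/δ₁) ^ γ = x ^ β := by
      rw [hγ, hx_def, Real.rpow_mul (by positivity)]
    have harith : (1+a) * ((1-β)*1 + β * x) = 1 + a * x := by
      rw [hβ_def]
      field_simp
      ring
    calc (1+a) * (r/δ₁) ^ γ = (1+a) * (1 ^ (1-β) * x ^ β) := by
          rw [hγβ, Real.one_rpow, one_mul]
      _ ≤ (1+a) * ((1-β)*1 + β * x) := by
          exact mul_le_mul_of_nonneg_left hgeo (by linarith)
      _ = 1 + a * x := harith
      _ = 1 + r ^ (2*θ) := by rw [hax]
  have h2 : (1 + r^(2*θ))^(-t) ≤ ((1+a) * (r/δ₁)^γ)^(-t) :=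
    Real.rpow_le_rpow_of_nonpos (by positivity) hbase (neg_nonpos.mpr ht)
  refine h2.trans_eq ?_
  rw [Real.mul_rpow (by positivity) (by positivity)]
  congr 1
  rw [← Real.rpow_mul (by positivity), Real.div_rpow hr0.le hδ.le,
    show γ * -t = -(γ*t) by ring, Real.rpow_neg hδ.le ]
  rw [div_inv_eq_mul]
  exact mul_comm _ _

lemma aux_bound (n : ℕ) (hn : 1 ≤ n) (θ δ₁ : ℝ) (hθ : 1 / 2 < θ) (hδ : 0 < δ₁) :
    ∃ C > (0 : ℝ), ∃ t₀ > (0 : ℝ), ∀ t ≥ t₀,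
      (∫ ξ in {ξ : EuclideanSpace ℝ (Fin n) | δ₁ ≤ ‖ξ‖},
          (1 + ‖ξ‖ ^ (2 * θ)) ^ (-t) * Real.sin (t * ‖ξ‖) ^ 2 / ‖ξ‖ ^ 2) ≤
        C * t⁻¹ * (1 + δ₁ ^ (2 * θ)) ^ (-t) := by
  set E := EuclideanSpace ℝ (Fin n)
  have hθ0 : 0 < θ := by linarith
  set a := δ₁ ^ (2*θ) with ha_def
  have ha : 0 < a := Real.rpow_pos_of_pos hδ _
  set γ : ℝ := 2*θ*(a/(1+a)) with hγ_def
  have hγ : 0 < γ := by positivity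
  set K : ℝ := (n : ℝ) * (volume (ball (0 : E) 1)).toReal with hK_def
  have hK : 0 < K := by
    refine mul_pos (by exact_mod_cast hn) (ENNReal.toReal_pos ?_ ?_)
    · exact (measure_ball_pos volume 0 one_pos).ne'
    · exact measure_ball_lt_top.ne
  refine ⟨K * δ₁ ^ ((n:ℝ) - 2) * 2 / γ, by positivity, (2*(n:ℝ)+2)/γ + 1, by positivity, ?_⟩
  intro t ht
  have ht1 : (1:ℝ) ≤ t := le_trans (le_add_of_nonneg_left (by positivity)) ht
  have ht0 : (0:ℝ) < t := lt_of_lt_of_le one_pos ht1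
  have hγt : 2*(n:ℝ) + 2 ≤ γ * t := by
    have h1 : (2*(n:ℝ)+2)/γ ≤ t := by linarith
    calc 2*(n:ℝ)+2 = γ * ((2*(n:ℝ)+2)/γ) := by field_simp
      _ ≤ γ * t := mul_le_mul_of_nonneg_left h1 hγ.le
  set p : ℝ := γ * t + 2 with hp_def
  have hpn : (n:ℝ) < p := by
    have : (1:ℝ) ≤ n := by exact_mod_cast hn
    nlinarith
  have hS : MeasurableSet {ξ : E | δ₁ ≤ ‖ξ‖} :=
    measurableSet_le measurable_const measurable_norm
  set c : ℝ := (1 + a) ^ (-t) * δ₁ ^ (γ * t) with hc_def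
  have hc0 : 0 ≤ c := by positivity
  -- pointwise bound
  have hpt : ∀ ξ : E, ξ ∈ {ξ : E | δ₁ ≤ ‖ξ‖} →
      (1 + ‖ξ‖ ^ (2 * θ)) ^ (-t) * Real.sin (t * ‖ξ‖) ^ 2 / ‖ξ‖ ^ 2
        ≤ c * ‖ξ‖ ^ (-p) := by
    intro ξ hξ
    have hr : δ₁ ≤ ‖ξ‖ := hξ
    have hr0 : (0:ℝ) < ‖ξ‖ := lt_of_lt_of_le hδ hr
    have hkey := aux_key θ δ₁ γ t ‖ξ‖ hθ0 hδ hγ_def hr (le_of_lt ht0)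
    have hsin : Real.sin (t * ‖ξ‖) ^ 2 ≤ 1 := by
      have := Real.neg_one_le_sin (t * ‖ξ‖)
      have := Real.sin_le_one (t * ‖ξ‖)
      nlinarith
    calc (1 + ‖ξ‖ ^ (2 * θ)) ^ (-t) * Real.sin (t * ‖ξ‖) ^ 2 / ‖ξ‖ ^ 2
        ≤ (1 + a) ^ (-t) * (δ₁ ^ (γ*t) * ‖ξ‖ ^ (-(γ*t))) * 1 / ‖ξ‖ ^ 2 := by
          have h1 : (1 + ‖ξ‖ ^ (2 * θ)) ^ (-t) * Real.sin (t * ‖ξ‖) ^ 2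
              ≤ ((1 + a) ^ (-t) * (δ₁ ^ (γ*t) * ‖ξ‖ ^ (-(γ*t)))) * 1 :=
            mul_le_mul hkey hsin (by positivity) (by positivity)
          exact div_le_div_of_nonneg_right h1 (by positivity)
      _ = c * (‖ξ‖ ^ (-(γ*t)) / ‖ξ‖ ^ 2) := by rw [hc_def]; ring
      _ = c * ‖ξ‖ ^ (-p) := by
          congr 1
          rw [← Real.rpow_natCast ‖ξ‖ 2, ← Real.rpow_sub hr0]
          congr 1
          push_cast
          rw [hp_def]; ring
  -- integrate
  have hint : IntegrableOn (fun ξ : E => c * ‖ξ‖ ^ (-p)) {ξ : E | δ₁ ≤ ‖ξ‖} :=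
    (aux_integrable n δ₁ p hδ hpn).const_mul c
  have hmono : (∫ ξ in {ξ : E | δ₁ ≤ ‖ξ‖},
        (1 + ‖ξ‖ ^ (2 * θ)) ^ (-t) * Real.sin (t * ‖ξ‖) ^ 2 / ‖ξ‖ ^ 2)
      ≤ ∫ ξ in {ξ : E | δ₁ ≤ ‖ξ‖}, c * ‖ξ‖ ^ (-p) := by
    refine integral_mono_of_nonneg (Filter.Eventually.of_forall fun ξ => by positivity)
      hint ?_
    filter_upwards [ae_restrict_mem hS] with ξ hξ
    exact hpt ξ hξ
  have hval : (∫ ξ in {ξ : E | δ₁ ≤ ‖ξ‖}, c * ‖ξ‖ ^ (-p))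
      = (1 + a) ^ (-t) * (K * (δ₁ ^ ((n:ℝ) - 2) / (p - n))) := by
    rw [integral_const_mul, aux_int n hn δ₁ p hδ hpn, hc_def]
    have : δ₁ ^ (γ * t) * δ₁ ^ ((n:ℝ) - p) = δ₁ ^ ((n:ℝ) - 2) := by
      rw [← Real.rpow_add hδ]
      congr 1
      rw [hp_def]; ring
    calc (1 + a) ^ (-t) * δ₁ ^ (γ*t) * (K * (δ₁ ^ ((n:ℝ) - p) / (p - n)))
        = (1 + a) ^ (-t) * (K * ((δ₁ ^ (γ*t) * δ₁ ^ ((n:ℝ) - p)) / (p - n))) := by ring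
      _ = (1 + a) ^ (-t) * (K * (δ₁ ^ ((n:ℝ) - 2) / (p - n))) := by rw [this]
  have hfinal : K * (δ₁ ^ ((n:ℝ) - 2) / (p - n)) ≤ (K * δ₁ ^ ((n:ℝ) - 2) * 2 / γ) * t⁻¹ := by
    have hpn2 : γ * t / 2 ≤ p - n := by
      have : (1:ℝ) ≤ n := by exact_mod_cast hn
      rw [hp_def]
      nlinarith
    have h1 : δ₁ ^ ((n:ℝ) - 2) / (p - n) ≤ δ₁ ^ ((n:ℝ) - 2) / (γ * t / 2) :=
      div_le_div_of_nonneg_left (by positivity) (by positivity) hpn2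
    calc K * (δ₁ ^ ((n:ℝ) - 2) / (p - n)) ≤ K * (δ₁ ^ ((n:ℝ) - 2) / (γ * t / 2)) :=
          mul_le_mul_of_nonneg_left h1 hK.le
      _ = (K * δ₁ ^ ((n:ℝ) - 2) * 2 / γ) * t⁻¹ := by
          field_simp
  calc (∫ ξ in {ξ : E | δ₁ ≤ ‖ξ‖},
        (1 + ‖ξ‖ ^ (2 * θ)) ^ (-t) * Real.sin (t * ‖ξ‖) ^ 2 / ‖ξ‖ ^ 2)
      ≤ (1 + a) ^ (-t) * (K * (δ₁ ^ ((n:ℝ) - 2) / (p - n))) := hmono.trans_eq hval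
    _ ≤ (1 + a) ^ (-t) * ((K * δ₁ ^ ((n:ℝ) - 2) * 2 / γ) * t⁻¹) :=
        mul_le_mul_of_nonneg_left hfinal (by positivity)
    _ = (K * δ₁ ^ ((n:ℝ) - 2) * 2 / γ) * t⁻¹ * (1 + δ₁ ^ (2*θ)) ^ (-t) := by
        rw [ha_def]; ring

/-- Proposition 3.3: the high-frequency part of the squared profile satisfies
`∫_{|ξ|≥δ₁} (1+|ξ|^{2θ})^{-t} sin²(t|ξ|)/|ξ|² dξ ≤ C t⁻¹ (1+δ₁^{2θ})^{-t}` for large `t`;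
in particular it is `o(t^{-n/(2θ)})` as `t → ∞`. -/
theorem stmt_10 (n : ℕ) (hn : 1 ≤ n) (θ δ₁ : ℝ) (hθ : 1 / 2 < θ) (hδ : 0 < δ₁) :
    (∃ C > (0 : ℝ), ∃ t₀ > (0 : ℝ), ∀ t ≥ t₀,
      (∫ ξ in {ξ : EuclideanSpace ℝ (Fin n) | δ₁ ≤ ‖ξ‖},
          (1 + ‖ξ‖ ^ (2 * θ)) ^ (-t) * Real.sin (t * ‖ξ‖) ^ 2 / ‖ξ‖ ^ 2) ≤
        C * t⁻¹ * (1 + δ₁ ^ (2 * θ)) ^ (-t)) ∧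
    Tendsto (fun t : ℝ =>
        (∫ ξ in {ξ : EuclideanSpace ℝ (Fin n) | δ₁ ≤ ‖ξ‖},
          (1 + ‖ξ‖ ^ (2 * θ)) ^ (-t) * Real.sin (t * ‖ξ‖) ^ 2 / ‖ξ‖ ^ 2) *
          t ^ ((n : ℝ) / (2 * θ)))
      atTop (nhds 0) := by
  refine ⟨aux_bound n hn θ δ₁ hθ hδ, ?_⟩
  obtain ⟨C, hC, t₀, ht₀, hbound⟩ := aux_bound n hn θ δ₁ hθ hδ
  set E := EuclideanSpace ℝ (Fin n)
  have hS : MeasurableSet {ξ : E | δ₁ ≤ ‖ξ‖} :=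
    measurableSet_le measurable_const measurable_norm
  set A : ℝ := 1 + δ₁ ^ (2 * θ) with hA_def
  have hA1 : 1 < A := by
    have := Real.rpow_pos_of_pos hδ (2 * θ)
    rw [hA_def]; linarith
  have hA0 : 0 < A := lt_trans one_pos hA1
  set e : ℝ := (n : ℝ) / (2 * θ) with he_def
  set F : ℝ → ℝ := fun t => ∫ ξ in {ξ : E | δ₁ ≤ ‖ξ‖},
      (1 + ‖ξ‖ ^ (2 * θ)) ^ (-t) * Real.sin (t * ‖ξ‖) ^ 2 / ‖ξ‖ ^ 2 with hF_def
  have hg : Tendsto (fun t : ℝ => C * (t ^ (e - 1) * Real.exp (-(Real.log A) * t)))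
      atTop (nhds 0) := by
    have := (tendsto_rpow_mul_exp_neg_mul_atTop_nhds_zero (e - 1) (Real.log A)
      (Real.log_pos hA1)).const_mul C
    simpa using this
  refine squeeze_zero' ?_ ?_ hg
  · filter_upwards [eventually_ge_atTop (1:ℝ)] with t ht
    have hF : 0 ≤ F t := setIntegral_nonneg hS fun ξ _ => by positivity
    exact mul_nonneg hF (Real.rpow_nonneg (by linarith) _)
  · filter_upwards [eventually_ge_atTop (max t₀ 1)] with t ht
    have ht1 : (1:ℝ) ≤ t := le_trans (le_max_right _ _) ht
    have ht0 : (0:ℝ) < t := lt_of_lt_of_le one_pos ht1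
    have hb := hbound t (le_trans (le_max_left _ _) ht)
    have hexp : A ^ (-t) = Real.exp (-(Real.log A) * t) := by
      rw [Real.rpow_def_of_pos hA0]
      congr 1
      ring
    have hpow : t⁻¹ * t ^ e = t ^ (e - 1) := by
      rw [← Real.rpow_neg_one t, ← Real.rpow_add ht0]
      congr 1
      ring
    calc F t * t ^ e ≤ (C * t⁻¹ * A ^ (-t)) * t ^ e :=
          mul_le_mul_of_nonneg_right hb (Real.rpow_nonneg ht0.le _)
      _ = C * (t ^ (e - 1) * Real.exp (-(Real.log A) * t)) := by
          rw [hexp, ← hpow]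
          ring
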